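/- Let D ≥ 1, let x ∈ ℝ, let X be a bounded real random variable and U, U¹, U² bounded random vectors in ℝ^D (all defined on a common probability space), and let Z be a standard Gaussian random vector in ℝ^D independent of (X, U, U¹, U²). Then E[ exp( ∑_{a=1,2} ( x·X·⟨U, U^a⟩ + x·⟨Z, U^a⟩ − (x²/2)·‖U^a‖² ) ) ] = E[ exp( x·X·(⟨U, U¹⟩ + ⟨U, U²⟩) + x²·⟨U¹, U²⟩ ) ]. -/

import Mathlib

open MeasureTheory ProbabilityTheory Real
open scoped RealInnerProductSpace ENNReal NNReal

section CavityAux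

lemma gauss_exp_integral (c : ℝ) :
    ∫ t, Real.exp (t * c) ∂(gaussianReal 0 1) = Real.exp (c ^ 2 / 2) := by
  rw [gaussianReal_of_var_ne_zero 0 one_ne_zero]
  have hmeas : Measurable fun t => (gaussianPDFReal 0 1 t).toNNReal :=
    (measurable_gaussianPDFReal 0 1).real_toNNReal
  have hpdf : gaussianPDF 0 1 = fun t => ((gaussianPDFReal 0 1 t).toNNReal : ℝ≥0∞) := rfl
  rw [hpdf, integral_withDensity_eq_integral_smul hmeas]
  have hkey : ∀ t : ℝ, ((gaussianPDFReal 0 1 t).toNNReal : ℝ) • Real.exp (t * c)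
      = Real.exp (c ^ 2 / 2) * ((Real.sqrt (2 * Real.pi))⁻¹ * Real.exp (-(1/2) * (t - c) ^ 2)) := by
    intro t
    rw [smul_eq_mul, Real.coe_toNNReal _ (gaussianPDFReal_nonneg 0 1 t)]
    unfold gaussianPDFReal
    simp only [NNReal.coe_one, mul_one, sub_zero]
    have h2 : Real.exp (c ^ 2 / 2) * ((Real.sqrt (2 * Real.pi))⁻¹ * Real.exp (-(1/2) * (t - c) ^ 2))
        = (Real.sqrt (2 * Real.pi))⁻¹ * Real.exp (c ^ 2 / 2 + -(1/2) * (t - c) ^ 2) := by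
      rw [Real.exp_add]; ring
    rw [h2, mul_assoc, ← Real.exp_add]
    congr 1
    ring
  simp_rw [NNReal.smul_def, hkey]
  rw [integral_const_mul, integral_const_mul,
    integral_sub_right_eq_self (fun t => Real.exp (-(1/2) * t ^ 2)) c]
  rw [integral_gaussian]
  have h3 : Real.sqrt (π / (1/2)) = Real.sqrt (2 * π) := by
    congr 1; ring
  rw [h3, inv_mul_cancel₀ (by positivity), mul_one]

lemma gauss_exp_integrable (c : ℝ) :
    Integrable (fun t => Real.exp (t * c)) (gaussianReal 0 1) := by
  rw [gaussianReal_of_var_ne_zero 0 one_ne_zero]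
  have hmeas : Measurable fun t => (gaussianPDFReal 0 1 t).toNNReal :=
    (measurable_gaussianPDFReal 0 1).real_toNNReal
  have hpdf : gaussianPDF 0 1 = fun t => ((gaussianPDFReal 0 1 t).toNNReal : ℝ≥0∞) := rfl
  rw [hpdf, integrable_withDensity_iff_integrable_smul hmeas]
  have hkey : ∀ t : ℝ, ((gaussianPDFReal 0 1 t).toNNReal : ℝ≥0) • Real.exp (t * c)
      = Real.exp (c ^ 2 / 2) * ((Real.sqrt (2 * Real.pi))⁻¹ * Real.exp (-(1/2) * (t - c) ^ 2)) := by
    intro t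
    rw [NNReal.smul_def, smul_eq_mul, Real.coe_toNNReal _ (gaussianPDFReal_nonneg 0 1 t)]
    unfold gaussianPDFReal
    simp only [NNReal.coe_one, mul_one, sub_zero]
    have h2 : Real.exp (c ^ 2 / 2) * ((Real.sqrt (2 * Real.pi))⁻¹ * Real.exp (-(1/2) * (t - c) ^ 2))
        = (Real.sqrt (2 * Real.pi))⁻¹ * Real.exp (c ^ 2 / 2 + -(1/2) * (t - c) ^ 2) := by
      rw [Real.exp_add]; ring
    rw [h2, mul_assoc, ← Real.exp_add]
    congr 1
    ring
  simp_rw [hkey]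
  have hint : Integrable (fun t : ℝ => Real.exp (-(1/2) * (t - c) ^ 2)) := by
    exact (integrable_exp_neg_mul_sq (by norm_num : (0:ℝ) < 1/2)).comp_sub_right c
  exact (hint.const_mul _).const_mul _

lemma gauss_exp_abs_integrable (c : ℝ) :
    Integrable (fun t => Real.exp (|t| * c)) (gaussianReal 0 1) := by
  refine ((gauss_exp_integrable c).add (gauss_exp_integrable (-c))).mono'
    (Continuous.aestronglyMeasurable (by continuity)) (ae_of_all _ fun t => ?_)
  rw [Real.norm_eq_abs, abs_of_pos (Real.exp_pos _)]
  have h1 : |t| * c ≤ |t * c| := by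
    rw [abs_mul]
    rcases le_or_gt 0 c with hc | hc
    · rw [abs_of_nonneg hc]
    · calc |t| * c ≤ 0 := mul_nonpos_of_nonneg_of_nonpos (abs_nonneg t) hc.le
        _ ≤ |t| * |c| := mul_nonneg (abs_nonneg t) (abs_nonneg c)
  calc Real.exp (|t| * c) ≤ Real.exp |t * c| := Real.exp_le_exp.2 h1
    _ ≤ Real.exp (t * c) + Real.exp (-(t * c)) := by
        rcases abs_cases (t * c) with ⟨h, _⟩ | ⟨h, _⟩
        · rw [h]; nlinarith [Real.exp_pos (-(t*c))]
        · rw [h]; nlinarith [Real.exp_pos (t*c)]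
    _ = Real.exp (t * c) + Real.exp (t * -c) := by ring_nf

lemma pi_gauss_exp_integral {D : ℕ} (a : Fin D → ℝ) :
    ∫ z : Fin D → ℝ, Real.exp (∑ i, z i * a i) ∂(Measure.pi fun _ : Fin D => gaussianReal 0 1)
      = Real.exp ((∑ i, a i ^ 2) / 2) := by
  have hprod : ∫ z : Fin D → ℝ, ∏ i, Real.exp (z i * a i)
        ∂(Measure.pi fun _ : Fin D => gaussianReal 0 1)
      = ∏ i, ∫ t, Real.exp (t * a i) ∂(gaussianReal 0 1) :=
    integral_fintype_prod_eq_prod (μ := fun _ => gaussianReal 0 1)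
      (fun i t => Real.exp (t * a i))
  simp_rw [Real.exp_sum]
  rw [hprod, Finset.sum_div, Real.exp_sum]
  exact Finset.prod_congr rfl fun i _ => by rw [gauss_exp_integral]

lemma pi_gauss_exp_abs_integrable {D : ℕ} (c : ℝ) :
    Integrable (fun z : Fin D → ℝ => ∏ i, Real.exp (|z i| * c))
      (Measure.pi fun _ : Fin D => gaussianReal 0 1) :=
  Integrable.fintype_prod (f := fun _ t => Real.exp (|t| * c))
    (μ := fun _ => gaussianReal 0 1)
    (fun _ => gauss_exp_abs_integrable c)

lemma euclid_norm_sq_eq {D : ℕ} (a : EuclideanSpace ℝ (Fin D)) :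
    ‖a‖ ^ 2 = ∑ i, a i ^ 2 := by
  rw [EuclideanSpace.norm_eq, Real.sq_sqrt (Finset.sum_nonneg fun i _ => sq_nonneg _)]
  simp [sq_abs]

lemma euclid_coord_le {D : ℕ} (a : EuclideanSpace ℝ (Fin D)) (i : Fin D) :
    |a i| ≤ ‖a‖ := by
  rw [EuclideanSpace.norm_eq, ← Real.sqrt_sq_eq_abs]
  apply Real.sqrt_le_sqrt
  simpa [sq_abs] using
    Finset.single_le_sum (f := fun j => ‖a j‖ ^ 2) (fun j _ => sq_nonneg _) (Finset.mem_univ i)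

noncomputable def cavG (x : ℝ) {D : ℕ}
    (w : ℝ × EuclideanSpace ℝ (Fin D) × EuclideanSpace ℝ (Fin D) × EuclideanSpace ℝ (Fin D)) :
    ℝ :=
  x * w.1 * ⟪w.2.1, w.2.2.1⟫ - x ^ 2 / 2 * ‖w.2.2.1‖ ^ 2
    + (x * w.1 * ⟪w.2.1, w.2.2.2⟫ - x ^ 2 / 2 * ‖w.2.2.2‖ ^ 2)

noncomputable def cavA (x : ℝ) {D : ℕ}
    (w : ℝ × EuclideanSpace ℝ (Fin D) × EuclideanSpace ℝ (Fin D) × EuclideanSpace ℝ (Fin D)) :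
    EuclideanSpace ℝ (Fin D) :=
  x • (w.2.2.1 + w.2.2.2)

noncomputable def cavF (x : ℝ) {D : ℕ}
    (p : (ℝ × EuclideanSpace ℝ (Fin D) × EuclideanSpace ℝ (Fin D) × EuclideanSpace ℝ (Fin D))
      × EuclideanSpace ℝ (Fin D)) : ℝ :=
  Real.exp (cavG x p.1 + ⟪p.2, cavA x p.1⟫)

lemma cavF_measurable (x : ℝ) {D : ℕ} : Measurable (cavF x (D := D)) := by
  unfold cavF cavG cavA
  apply Real.measurable_exp.comp
  have i1 : Measurable fun p : (ℝ × EuclideanSpace ℝ (Fin D) × EuclideanSpace ℝ (Fin D)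
      × EuclideanSpace ℝ (Fin D)) × EuclideanSpace ℝ (Fin D) =>
      (⟪p.1.2.1, p.1.2.2.1⟫ : ℝ) :=
    Measurable.inner measurable_fst.snd.fst measurable_fst.snd.snd.fst
  have i2 : Measurable fun p : (ℝ × EuclideanSpace ℝ (Fin D) × EuclideanSpace ℝ (Fin D)
      × EuclideanSpace ℝ (Fin D)) × EuclideanSpace ℝ (Fin D) =>
      (⟪p.1.2.1, p.1.2.2.2⟫ : ℝ) :=
    Measurable.inner measurable_fst.snd.fst measurable_fst.snd.snd.snd
  have i3 : Measurable fun p : (ℝ × EuclideanSpace ℝ (Fin D) × EuclideanSpace ℝ (Fin D)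
      × EuclideanSpace ℝ (Fin D)) × EuclideanSpace ℝ (Fin D) =>
      (⟪p.2, x • (p.1.2.2.1 + p.1.2.2.2)⟫ : ℝ) :=
    Measurable.inner measurable_snd
      ((measurable_fst.snd.snd.fst.add measurable_fst.snd.snd.snd).const_smul x)
  have n1 : Measurable fun p : (ℝ × EuclideanSpace ℝ (Fin D) × EuclideanSpace ℝ (Fin D)
      × EuclideanSpace ℝ (Fin D)) × EuclideanSpace ℝ (Fin D) => ‖p.1.2.2.1‖ :=
    measurable_fst.snd.snd.fst.norm
  have n2 : Measurable fun p : (ℝ × EuclideanSpace ℝ (Fin D) × EuclideanSpace ℝ (Fin D)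
      × EuclideanSpace ℝ (Fin D)) × EuclideanSpace ℝ (Fin D) => ‖p.1.2.2.2‖ :=
    measurable_fst.snd.snd.snd.norm
  have t1 : Measurable fun p : (ℝ × EuclideanSpace ℝ (Fin D) × EuclideanSpace ℝ (Fin D)
      × EuclideanSpace ℝ (Fin D)) × EuclideanSpace ℝ (Fin D) => p.1.1 :=
    measurable_fst.fst
  exact ((((measurable_const.mul t1).mul i1).sub
      ((measurable_const.mul (n1.pow measurable_const)))).add
      (((measurable_const.mul t1).mul i2).sub
      ((measurable_const.mul (n2.pow measurable_const))))).add i3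

lemma cavF_integral (x : ℝ) {D : ℕ}
    (w : ℝ × EuclideanSpace ℝ (Fin D) × EuclideanSpace ℝ (Fin D) × EuclideanSpace ℝ (Fin D)) :
    ∫ z, cavF x (w, (MeasurableEquiv.toLp 2 (Fin D → ℝ)) z) ∂(Measure.pi fun _ : Fin D => gaussianReal 0 1)
      = Real.exp (cavG x w + ‖cavA x w‖ ^ 2 / 2) := by
  unfold cavF
  simp_rw [Real.exp_add]
  rw [integral_const_mul]
  have hinner : ∀ z : Fin D → ℝ, ⟪(MeasurableEquiv.toLp 2 (Fin D → ℝ)) z, cavA x w⟫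
      = ∑ i, z i * cavA x w i := by
    intro z
    simp [PiLp.inner_apply, RCLike.inner_apply, conj_trivial, mul_comm]
  simp_rw [hinner]
  rw [pi_gauss_exp_integral (fun i => cavA x w i)]
  rw [euclid_norm_sq_eq]

lemma cavGA_measurable (x : ℝ) {D : ℕ} :
    Measurable fun w : ℝ × EuclideanSpace ℝ (Fin D) × EuclideanSpace ℝ (Fin D)
        × EuclideanSpace ℝ (Fin D) => Real.exp (cavG x w + ‖cavA x w‖ ^ 2 / 2) := by
  unfold cavG cavA
  apply Real.measurable_exp.comp
  have i1 : Measurable fun w : ℝ × EuclideanSpace ℝ (Fin D) × EuclideanSpace ℝ (Fin D)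
      × EuclideanSpace ℝ (Fin D) => (⟪w.2.1, w.2.2.1⟫ : ℝ) :=
    Measurable.inner measurable_snd.fst measurable_snd.snd.fst
  have i2 : Measurable fun w : ℝ × EuclideanSpace ℝ (Fin D) × EuclideanSpace ℝ (Fin D)
      × EuclideanSpace ℝ (Fin D) => (⟪w.2.1, w.2.2.2⟫ : ℝ) :=
    Measurable.inner measurable_snd.fst measurable_snd.snd.snd
  have n1 : Measurable fun w : ℝ × EuclideanSpace ℝ (Fin D) × EuclideanSpace ℝ (Fin D)
      × EuclideanSpace ℝ (Fin D) => ‖w.2.2.1‖ :=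
    measurable_snd.snd.fst.norm
  have n2 : Measurable fun w : ℝ × EuclideanSpace ℝ (Fin D) × EuclideanSpace ℝ (Fin D)
      × EuclideanSpace ℝ (Fin D) => ‖w.2.2.2‖ :=
    measurable_snd.snd.snd.norm
  have nA : Measurable fun w : ℝ × EuclideanSpace ℝ (Fin D) × EuclideanSpace ℝ (Fin D)
      × EuclideanSpace ℝ (Fin D) => ‖x • (w.2.2.1 + w.2.2.2)‖ :=
    ((measurable_snd.snd.fst.add measurable_snd.snd.snd).const_smul x).norm
  have t1 : Measurable fun w : ℝ × EuclideanSpace ℝ (Fin D) × EuclideanSpace ℝ (Fin D)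
      × EuclideanSpace ℝ (Fin D) => w.1 :=
    measurable_fst
  exact ((((measurable_const.mul t1).mul i1).sub
      ((measurable_const.mul (n1.pow measurable_const)))).add
      (((measurable_const.mul t1).mul i2).sub
      ((measurable_const.mul (n2.pow measurable_const))))).add
      (((nA.pow measurable_const)).div measurable_const)

end CavityAux

set_option maxHeartbeats 1600000 in
theorem cavity_gaussian_moment
    {D : ℕ} (hD : 1 ≤ D) (x : ℝ)
    {Ω : Type*} [MeasureSpace Ω] [IsProbabilityMeasure (ℙ : Measure Ω)]
    (X : Ω → ℝ) (U U1 U2 : Ω → EuclideanSpace ℝ (Fin D))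
    (hXm : Measurable X) (hUm : Measurable U)
    (hU1m : Measurable U1) (hU2m : Measurable U2)
    (CX : ℝ) (hXb : ∀ ω, |X ω| ≤ CX)
    (CU : ℝ) (hUb : ∀ ω, ‖U ω‖ ≤ CU)
    (hU1b : ∀ ω, ‖U1 ω‖ ≤ CU) (hU2b : ∀ ω, ‖U2 ω‖ ≤ CU)
    (Z : Ω → EuclideanSpace ℝ (Fin D)) (hZm : Measurable Z)
    (hZ : Measure.map (fun ω => WithLp.ofLp (Z ω)) ℙ = Measure.pi fun _ : Fin D => gaussianReal 0 1)
    (hindep : IndepFun (fun ω => (X ω, U ω, U1 ω, U2 ω)) Z ℙ) :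
    ∫ ω, Real.exp
        (x * X ω * ⟪U ω, U1 ω⟫ + x * ⟪Z ω, U1 ω⟫ - x ^ 2 / 2 * ‖U1 ω‖ ^ 2
          + (x * X ω * ⟪U ω, U2 ω⟫ + x * ⟪Z ω, U2 ω⟫ - x ^ 2 / 2 * ‖U2 ω‖ ^ 2)) ∂ℙ
      = ∫ ω, Real.exp
          (x * X ω * (⟪U ω, U1 ω⟫ + ⟪U ω, U2 ω⟫) + x ^ 2 * ⟪U1 ω, U2 ω⟫) ∂ℙ := by
  classical
  set W : Ω → ℝ × EuclideanSpace ℝ (Fin D) × EuclideanSpace ℝ (Fin D)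
      × EuclideanSpace ℝ (Fin D) := fun ω => (X ω, U ω, U1 ω, U2 ω) with hWdef
  have hWm : Measurable W := hXm.prodMk (hUm.prodMk (hU1m.prodMk hU2m))
  have hmap : Measure.map (fun ω => (W ω, Z ω)) ℙ
      = (Measure.map W ℙ).prod (Measure.map Z ℙ) :=
    (indepFun_iff_map_prod_eq_prod_map_map hWm.aemeasurable hZm.aemeasurable).mp hindep
  haveI : IsProbabilityMeasure (Measure.map W ℙ) := Measure.isProbabilityMeasure_map hWm.aemeasurable
  haveI : IsProbabilityMeasure (Measure.map Z ℙ) :=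
    Measure.isProbabilityMeasure_map hZm.aemeasurable
  have hZ' : Measure.map Z ℙ = Measure.map (MeasurableEquiv.toLp 2 (Fin D → ℝ))
      (Measure.pi fun _ : Fin D => gaussianReal 0 1) := by
    rw [← hZ, Measure.map_map (f := fun ω => WithLp.ofLp (Z ω))
      (MeasurableEquiv.toLp 2 (Fin D → ℝ)).measurable
      ((MeasurableEquiv.toLp 2 (Fin D → ℝ)).symm.measurable.comp hZm)]
    rfl
  have hΩ : Nonempty Ω := by
    by_contra h
    have he : (Set.univ : Set Ω) = ∅ := Set.univ_eq_empty_iff.mpr (not_nonempty_iff.mp h)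
    have h1 := measure_univ (μ := (ℙ : Measure Ω))
    rw [he, measure_empty] at h1
    exact zero_ne_one h1
  obtain ⟨ω0⟩ := hΩ
  have hCX : 0 ≤ CX := (abs_nonneg _).trans (hXb ω0)
  have hCU : 0 ≤ CU := (norm_nonneg _).trans (hUb ω0)
  set Cg : ℝ := |x| * CX * (CU * CU) + |x| * CX * (CU * CU) with hCgdef
  set Ca : ℝ := |x| * (CU + CU) with hCadef
  -- the integrability of cavF on the product measure
  set S : Set (ℝ × EuclideanSpace ℝ (Fin D) × EuclideanSpace ℝ (Fin D)
      × EuclideanSpace ℝ (Fin D)) :=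
    {w | ‖w.1‖ ≤ CX ∧ ‖w.2.1‖ ≤ CU ∧ ‖w.2.2.1‖ ≤ CU ∧ ‖w.2.2.2‖ ≤ CU} with hSdef
  have hS : MeasurableSet S := by
    have : S = {w : ℝ × EuclideanSpace ℝ (Fin D) × EuclideanSpace ℝ (Fin D)
        × EuclideanSpace ℝ (Fin D) | ‖w.1‖ ≤ CX}
        ∩ ({w | ‖w.2.1‖ ≤ CU} ∩ ({w | ‖w.2.2.1‖ ≤ CU} ∩ {w | ‖w.2.2.2‖ ≤ CU})) := rfl
    rw [this]
    exact (measurableSet_le measurable_fst.norm measurable_const).inter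
      ((measurableSet_le measurable_snd.fst.norm measurable_const).inter
        ((measurableSet_le measurable_snd.snd.fst.norm measurable_const).inter
          (measurableSet_le measurable_snd.snd.snd.norm measurable_const)))
  have hae1 : ∀ᵐ w ∂(Measure.map W ℙ), w ∈ S := by
    refine (ae_map_iff hWm.aemeasurable hS).mpr ?_
    exact ae_of_all _ fun ω =>
      ⟨by simpa [Real.norm_eq_abs] using hXb ω, hUb ω, hU1b ω, hU2b ω⟩
  have hae2 : ∀ᵐ p ∂((Measure.map W ℙ).prod (Measure.map Z ℙ)), p.1 ∈ S := by
    have hfst : Measure.map Prod.fst ((Measure.map W ℙ).prod (Measure.map Z ℙ))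
        = Measure.map W ℙ := by
      rw [Measure.map_fst_prod, measure_univ, one_smul]
    exact ae_of_ae_map measurable_fst.aemeasurable (by rwa [hfst])
  have hbound : ∀ᵐ p ∂((Measure.map W ℙ).prod (Measure.map Z ℙ)),
      ‖cavF x p‖ ≤ Real.exp Cg * ∏ i, Real.exp (|p.2 i| * Ca) := by
    filter_upwards [hae2] with p hp
    obtain ⟨h1, h2, h3, h4⟩ := hp
    unfold cavF
    rw [Real.norm_eq_abs, abs_of_pos (Real.exp_pos _)]
    have hexp : Real.exp Cg * ∏ i, Real.exp (|p.2 i| * Ca)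
        = Real.exp (Cg + ∑ i, |p.2 i| * Ca) := by
      rw [← Real.exp_sum, ← Real.exp_add]
    rw [hexp]
    apply Real.exp_le_exp.2
    rw [Real.norm_eq_abs] at h1
    have hA : ‖cavA x p.1‖ ≤ Ca := by
      unfold cavA
      rw [norm_smul, Real.norm_eq_abs]
      exact mul_le_mul_of_nonneg_left ((norm_add_le _ _).trans (add_le_add h3 h4))
        (abs_nonneg x)
    have c1 : x * p.1.1 * ⟪p.1.2.1, p.1.2.2.1⟫ ≤ |x| * CX * (CU * CU) := by
      calc x * p.1.1 * ⟪p.1.2.1, p.1.2.2.1⟫ ≤ |x * p.1.1 * ⟪p.1.2.1, p.1.2.2.1⟫| :=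
            le_abs_self _
        _ = |x| * |p.1.1| * |⟪p.1.2.1, p.1.2.2.1⟫| := by rw [abs_mul, abs_mul]
        _ ≤ |x| * CX * (CU * CU) := by
            have hcs : |⟪p.1.2.1, p.1.2.2.1⟫| ≤ CU * CU :=
              (abs_real_inner_le_norm _ _).trans (mul_le_mul h2 h3 (norm_nonneg _) hCU)
            gcongr
    have c2 : x * p.1.1 * ⟪p.1.2.1, p.1.2.2.2⟫ ≤ |x| * CX * (CU * CU) := by
      calc x * p.1.1 * ⟪p.1.2.1, p.1.2.2.2⟫ ≤ |x * p.1.1 * ⟪p.1.2.1, p.1.2.2.2⟫| :=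
            le_abs_self _
        _ = |x| * |p.1.1| * |⟪p.1.2.1, p.1.2.2.2⟫| := by rw [abs_mul, abs_mul]
        _ ≤ |x| * CX * (CU * CU) := by
            have hcs : |⟪p.1.2.1, p.1.2.2.2⟫| ≤ CU * CU :=
              (abs_real_inner_le_norm _ _).trans (mul_le_mul h2 h4 (norm_nonneg _) hCU)
            gcongr
    have hG : cavG x p.1 ≤ Cg := by
      unfold cavG
      have n1 : 0 ≤ x ^ 2 / 2 * ‖p.1.2.2.1‖ ^ 2 := by positivity
      have n2 : 0 ≤ x ^ 2 / 2 * ‖p.1.2.2.2‖ ^ 2 := by positivity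
      rw [hCgdef]
      linarith
    have hI : ⟪p.2, cavA x p.1⟫ ≤ ∑ i, |p.2 i| * Ca := by
      have hinner : (⟪p.2, cavA x p.1⟫ : ℝ) = ∑ i, p.2 i * cavA x p.1 i := by
        simp [PiLp.inner_apply, RCLike.inner_apply, conj_trivial, mul_comm]
      rw [hinner]
      refine Finset.sum_le_sum fun i _ => ?_
      calc p.2 i * cavA x p.1 i ≤ |p.2 i * cavA x p.1 i| := le_abs_self _
        _ = |p.2 i| * |cavA x p.1 i| := abs_mul _ _
        _ ≤ |p.2 i| * Ca :=
            mul_le_mul_of_nonneg_left ((euclid_coord_le _ i).trans hA) (abs_nonneg _)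
    linarith
  have hHint : Integrable (fun z : EuclideanSpace ℝ (Fin D) => ∏ i, Real.exp (|z i| * Ca))
      (Measure.map Z ℙ) := by
    rw [hZ', integrable_map_equiv (MeasurableEquiv.toLp 2 (Fin D → ℝ))]
    exact pi_gauss_exp_abs_integrable Ca
  have hFint : Integrable (cavF x) ((Measure.map W ℙ).prod (Measure.map Z ℙ)) := by
    refine Integrable.mono' ?_ (cavF_measurable x).aestronglyMeasurable hbound
    exact (integrable_const (Real.exp Cg)).mul_prod hHint
  calc
    ∫ ω, Real.exp
        (x * X ω * ⟪U ω, U1 ω⟫ + x * ⟪Z ω, U1 ω⟫ - x ^ 2 / 2 * ‖U1 ω‖ ^ 2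
          + (x * X ω * ⟪U ω, U2 ω⟫ + x * ⟪Z ω, U2 ω⟫ - x ^ 2 / 2 * ‖U2 ω‖ ^ 2)) ∂ℙ
      = ∫ ω, cavF x (W ω, Z ω) ∂ℙ := by
        refine integral_congr_ae (ae_of_all _ fun ω => ?_)
        unfold cavF cavG cavA
        simp only [inner_add_right, real_inner_smul_right]
        congr 1
        ring
    _ = ∫ p, cavF x p ∂((Measure.map W ℙ).prod (Measure.map Z ℙ)) := by
        rw [← hmap]
        exact (integral_map (hWm.prodMk hZm).aemeasurable
          (cavF_measurable x).aestronglyMeasurable).symm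
    _ = ∫ w, ∫ z, cavF x (w, z) ∂(Measure.map Z ℙ) ∂(Measure.map W ℙ) :=
        integral_prod _ hFint
    _ = ∫ w, Real.exp (cavG x w + ‖cavA x w‖ ^ 2 / 2) ∂(Measure.map W ℙ) := by
        refine integral_congr_ae (ae_of_all _ fun w => ?_)
        dsimp only
        rw [hZ', integral_map_equiv (MeasurableEquiv.toLp 2 (Fin D → ℝ))]
        exact cavF_integral x w
    _ = ∫ ω, Real.exp (cavG x (W ω) + ‖cavA x (W ω)‖ ^ 2 / 2) ∂ℙ :=
        integral_map hWm.aemeasurable (cavGA_measurable x).aestronglyMeasurable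
    _ = ∫ ω, Real.exp
          (x * X ω * (⟪U ω, U1 ω⟫ + ⟪U ω, U2 ω⟫) + x ^ 2 * ⟪U1 ω, U2 ω⟫) ∂ℙ := by
        refine integral_congr_ae (ae_of_all _ fun ω => ?_)
        have hw : W ω = (X ω, U ω, U1 ω, U2 ω) := rfl
        simp only [hw]
        unfold cavG cavA
        dsimp only
        rw [Real.exp_eq_exp, norm_smul, Real.norm_eq_abs, mul_pow, sq_abs, norm_add_sq_real]
        ring
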